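/- Let K ∈ ℝ^{M×M} have positive entries, let μ, ν ∈ ℝ^M have positive entries with Σ_i μ_i = Σ_j ν_j = 1, and define the Sinkhorn iterates π^{(0)} := K, π^{(2l−1)}_{ij} := π^{(2l−2)}_{ij}·μ_i/(Σ_s π^{(2l−2)}_{is}), and π^{(2l)}_{ij} := π^{(2l−1)}_{ij}·ν_j/(Σ_s π^{(2l−1)}_{sj}) for l ≥ 1. Then for every π ∈ Π(μ, ν) and every l ≥ 1, KL(π, π^{(2l−2)}) − KL(π, π^{(2l)}) ≥ KL(μ, r^{(2l−2)}) + KL(ν, c^{(2l−1)}), where r^{(2l−2)}_i := Σ_j π^{(2l−2)}_{ij} and c^{(2l−1)}_j := Σ_i π^{(2l−1)}_{ij}. -/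

import Mathlib

/-- Kullback--Leibler divergence of two nonnegative vectors. -/
noncomputable def KL {ι : Type*} [Fintype ι] (p q : ι → ℝ) : ℝ :=
  ∑ j, (p j * Real.log (p j / q j) - p j + q j)

/-- Kullback--Leibler divergence of two nonnegative `M×M` matrices. -/
noncomputable def KL2 {M : ℕ} (p q : Fin M → Fin M → ℝ) : ℝ :=
  ∑ i, ∑ j, (p i j * Real.log (p i j / q i j) - p i j + q i j)

/-- The Sinkhorn iterates: `π⁽⁰⁾ = K`, odd steps rescale the rows to have row
sums `μ`, even steps rescale the columns to have column sums `ν`. -/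
noncomputable def sinkhorn {M : ℕ} (K : Fin M → Fin M → ℝ) (μ ν : Fin M → ℝ) :
    ℕ → Fin M → Fin M → ℝ :=
  fun k => Nat.rec K
    (fun n prev =>
      if n % 2 = 0 then fun i j => prev i j * μ i / (∑ s, prev i s)
      else fun i j => prev i j * ν j / (∑ s, prev s j)) k

lemma sinkhorn_succ {M : ℕ} (K : Fin M → Fin M → ℝ) (μ ν : Fin M → ℝ) (n : ℕ) :
    sinkhorn K μ ν (n + 1) =
      if n % 2 = 0 then
        fun i j => sinkhorn K μ ν n i j * μ i / (∑ s, sinkhorn K μ ν n i s)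
      else fun i j => sinkhorn K μ ν n i j * ν j / (∑ s, sinkhorn K μ ν n s j) := rfl

lemma sinkhorn_pos {M : ℕ} [Nonempty (Fin M)] {K : Fin M → Fin M → ℝ}
    (hK : ∀ i j, 0 < K i j) {μ ν : Fin M → ℝ} (hμ : ∀ i, 0 < μ i)
    (hν : ∀ j, 0 < ν j) : ∀ k i j, 0 < sinkhorn K μ ν k i j := by
  intro k
  induction k with
  | zero => exact hK
  | succ n ih =>
    intro i j
    rw [sinkhorn_succ]
    split
    · exact div_pos (mul_pos (ih i j) (hμ i))
        (Finset.sum_pos (fun s _ => ih i s) Finset.univ_nonempty)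
    · exact div_pos (mul_pos (ih i j) (hν j))
        (Finset.sum_pos (fun s _ => ih s j) Finset.univ_nonempty)

theorem stmt7 {M : ℕ} (K : Fin M → Fin M → ℝ) (hK : ∀ i j, 0 < K i j)
    (μ ν : Fin M → ℝ) (hμ : ∀ i, 0 < μ i) (hν : ∀ j, 0 < ν j)
    (hμs : ∑ i, μ i = 1) (hνs : ∑ j, ν j = 1) :
    ∀ π : Fin M → Fin M → ℝ,
      (∀ i j, 0 ≤ π i j) → (∀ i, ∑ j, π i j = μ i) → (∀ j, ∑ i, π i j = ν j) →
      ∀ l : ℕ,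
        KL μ (fun i => ∑ j, sinkhorn K μ ν (2 * l) i j) +
            KL ν (fun j => ∑ i, sinkhorn K μ ν (2 * l + 1) i j) ≤
          KL2 π (sinkhorn K μ ν (2 * l)) -
            KL2 π (sinkhorn K μ ν (2 * l + 2)) := by
  intro π hπ hrow hcol l
  -- M is positive
  rcases Nat.eq_zero_or_pos M with hM | hM
  · subst hM; simp at hμs
  haveI : Nonempty (Fin M) := Fin.pos_iff_nonempty.mp hM
  set p : Fin M → Fin M → ℝ := sinkhorn K μ ν (2 * l) with hp_def
  have hp : ∀ i j, 0 < p i j := sinkhorn_pos hK hμ hν (2 * l)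
  set r : Fin M → ℝ := fun i => ∑ j, p i j with hr_def
  have hr : ∀ i, 0 < r i :=
    fun i => Finset.sum_pos (fun j _ => hp i j) Finset.univ_nonempty
  have h1 : sinkhorn K μ ν (2 * l + 1) = fun i j => p i j * μ i / r i := by
    rw [sinkhorn_succ]; simp [Nat.mul_mod_right, ← hp_def, ← hr_def]; rfl
  set q1 : Fin M → Fin M → ℝ := fun i j => p i j * μ i / r i with hq1_def
  have hq1 : ∀ i j, 0 < q1 i j :=
    fun i j => div_pos (mul_pos (hp i j) (hμ i)) (hr i)
  set c : Fin M → ℝ := fun j => ∑ i, q1 i j with hc_def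
  have hc : ∀ j, 0 < c j :=
    fun j => Finset.sum_pos (fun i _ => hq1 i j) Finset.univ_nonempty
  have h2 : sinkhorn K μ ν (2 * l + 2) = fun i j => q1 i j * ν j / c j := by
    have e : 2 * l + 2 = (2 * l + 1) + 1 := rfl
    rw [e, sinkhorn_succ, h1]
    have : (2 * l + 1) % 2 = 1 := by omega
    simp [this]; rfl
  set q2 : Fin M → Fin M → ℝ := fun i j => q1 i j * ν j / c j with hq2_def
  have hq2 : ∀ i j, 0 < q2 i j :=
    fun i j => div_pos (mul_pos (hq1 i j) (hν j)) (hc j)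
  -- row sums of q1 are μ
  have hq1row : ∀ i, ∑ j, q1 i j = μ i := by
    intro i
    have e : ∑ j, q1 i j = r i * μ i / r i := by
      simp only [hq1_def]
      rw [← Finset.sum_div, ← Finset.sum_mul]
    rw [e]; exact mul_div_cancel_left₀ _ (hr i).ne'
  -- column sums of q2 are ν
  have hq2col : ∀ j, ∑ i, q2 i j = ν j := by
    intro j
    have e : ∑ i, q2 i j = c j * ν j / c j := by
      simp only [hq2_def]
      rw [← Finset.sum_div, ← Finset.sum_mul]
    rw [e]; exact mul_div_cancel_left₀ _ (hc j).ne'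
  have hcsum : ∑ j, c j = 1 := by
    simp only [hc_def]
    rw [Finset.sum_comm]
    simp [hq1row, hμs]
  set A : Fin M → ℝ := fun i => Real.log (μ i) - Real.log (r i) with hA_def
  set B : Fin M → ℝ := fun j => Real.log (ν j) - Real.log (c j) with hB_def
  have hterm : ∀ i j,
      (π i j * Real.log (π i j / p i j) - π i j + p i j) -
        (π i j * Real.log (π i j / q2 i j) - π i j + q2 i j) =
      π i j * (A i + B j) + (p i j - q2 i j) := by
    intro i j
    rcases (hπ i j).eq_or_lt with h | h
    · simp [← h]
    · have hlog : Real.log (q2 i j) = Real.log (p i j) + A i + B j := by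
        have e : q2 i j = p i j * μ i / r i * ν j / c j := rfl
        rw [e, Real.log_div
            (mul_pos (div_pos (mul_pos (hp i j) (hμ i)) (hr i)) (hν j)).ne'
            (hc j).ne',
          Real.log_mul (div_pos (mul_pos (hp i j) (hμ i)) (hr i)).ne'
            (hν j).ne',
          Real.log_div (mul_pos (hp i j) (hμ i)).ne' (hr i).ne',
          Real.log_mul (hp i j).ne' (hμ i).ne']
        simp only [hA_def, hB_def]
        ring
      rw [Real.log_div h.ne' (hp i j).ne', Real.log_div h.ne' (hq2 i j).ne',
        hlog]
      ring
  have hmain : KL2 π p - KL2 π q2 =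
      (∑ i, μ i * A i) + (∑ j, ν j * B j) + ((∑ i, r i) - 1) := by
    have e1 : KL2 π p - KL2 π q2 =
        ∑ i, ∑ j, (π i j * (A i + B j) + (p i j - q2 i j)) := by
      rw [KL2, KL2, ← Finset.sum_sub_distrib]
      refine Finset.sum_congr rfl fun i _ => ?_
      rw [← Finset.sum_sub_distrib]
      exact Finset.sum_congr rfl fun j _ => hterm i j
    rw [e1]
    have e2 : ∀ i, ∑ j, (π i j * (A i + B j) + (p i j - q2 i j)) =
        μ i * A i + (∑ j, π i j * B j) + (r i - ∑ j, q2 i j) := by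
      intro i
      rw [Finset.sum_add_distrib, Finset.sum_sub_distrib]
      have e5 : ∑ j, π i j * (A i + B j) =
          (∑ j, π i j) * A i + ∑ j, π i j * B j := by
        rw [Finset.sum_mul, ← Finset.sum_add_distrib]
        exact Finset.sum_congr rfl fun j _ => by ring
      have e6 : (∑ j, p i j) = r i := rfl
      rw [e5, hrow i, e6]
    rw [Finset.sum_congr rfl fun i _ => e2 i]
    rw [Finset.sum_add_distrib, Finset.sum_add_distrib, Finset.sum_sub_distrib]
    have e3 : ∑ i, ∑ j, π i j * B j = ∑ j, ν j * B j := by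
      rw [Finset.sum_comm]
      exact Finset.sum_congr rfl fun j _ => by
        rw [← Finset.sum_mul, hcol j]
    have e4 : ∑ i, ∑ j, q2 i j = 1 := by
      rw [Finset.sum_comm]
      simp [hq2col, hνs]
    rw [e3, e4]
  have hKLμ : KL μ r = (∑ i, μ i * A i) + ((∑ i, r i) - 1) := by
    rw [KL]
    have : ∀ i, μ i * Real.log (μ i / r i) - μ i + r i =
        μ i * A i + (r i - μ i) := by
      intro i
      rw [Real.log_div (hμ i).ne' (hr i).ne', hA_def]
      ring
    rw [Finset.sum_congr rfl fun i _ => this i, Finset.sum_add_distrib,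
      Finset.sum_sub_distrib, hμs]
  have hKLν : KL ν c = ∑ j, ν j * B j := by
    rw [KL]
    have : ∀ j, ν j * Real.log (ν j / c j) - ν j + c j =
        ν j * B j + (c j - ν j) := by
      intro j
      rw [Real.log_div (hν j).ne' (hc j).ne', hB_def]
      ring
    rw [Finset.sum_congr rfl fun j _ => this j, Finset.sum_add_distrib,
      Finset.sum_sub_distrib, hνs, hcsum]
    ring
  have hgoal2 : (fun j => ∑ i, sinkhorn K μ ν (2 * l + 1) i j) = c := by
    funext j; rw [h1]
  rw [h2, hgoal2, hKLμ, hKLν, hmain]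
  linarith
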